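/- arXiv:2605.14305 — 4 statements merged into one kernel-verified Lean document; each statement's English description precedes it below -/
import Mathlib

section
/- Under a position-wise factorized forward corruption process, the clean token at position i is conditionally independent of the corrupted prefix given the corrupted suffix and the clean prefix. Precisely: for every index i with 1 ≤ i ≤ d, every x_t ∈ V^d and every w ∈ V^{i-1} such that P(X_t = x_t, X_0^{<i} = w) > 0, and every a ∈ V, one has P(X_0^i = a | X_t = x_t, X_0^{<i} = w) = P(X_0^i = a | X_t^{≥ i} = x_t^{≥ i}, X_0^{<i} = w). -/
open scoped Classical

/-- Joint probability mass function of the clean sequence `x0` and the corrupted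
sequence `xt` under a position-wise factorized forward corruption process:
`p(x0, xt) = p0 x0 * ∏ j, q j (xt j | x0 j)`, where `q j u v` is the probability
that position `j` is corrupted to `u` given clean token `v`. -/
noncomputable def jointPMF {V : Type*} [Fintype V] {d : ℕ}
    (p0 : (Fin d → V) → ℝ) (q : Fin d → V → V → ℝ)
    (x0 xt : Fin d → V) : ℝ :=
  p0 x0 * ∏ j, q j (xt j) (x0 j)

/-- Probability of an event `A` on the pair `(X_0, X_t)`. -/
noncomputable def Pr {V : Type*} [Fintype V] {d : ℕ}
    (p0 : (Fin d → V) → ℝ) (q : Fin d → V → V → ℝ)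
    (A : (Fin d → V) → (Fin d → V) → Prop) : ℝ :=
  ∑ x0 : Fin d → V, ∑ xt : Fin d → V,
    if A x0 xt then jointPMF p0 q x0 xt else 0

private lemma cticp_Pr_eq_point {V : Type*} [Fintype V] {d : ℕ}
    (p0 : (Fin d → V) → ℝ) (q : Fin d → V → V → ℝ) (xt : Fin d → V)
    (P : (Fin d → V) → Prop)
    (A : (Fin d → V) → (Fin d → V) → Prop)
    (hA : ∀ y0 yt, A y0 yt ↔ (yt = xt ∧ P y0)) :
    Pr p0 q A = ∑ y0, if P y0 then p0 y0 * ∏ j, q j (xt j) (y0 j) else 0 := by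
  unfold Pr jointPMF
  refine Finset.sum_congr rfl fun y0 _ => ?_
  simp only [hA]
  by_cases hP : P y0
  · simp [hP]
  · simp [hP]

private lemma cticp_sum_collapse {V : Type*} [Fintype V] {d : ℕ}
    (q : Fin d → V → V → ℝ) (hqsum : ∀ j v, ∑ u, q j u v = 1)
    (i : Fin d) (xt y0 : Fin d → V) :
    (∑ yt : Fin d → V, if (∀ j : Fin d, i ≤ j → yt j = xt j) then
        ∏ j, q j (yt j) (y0 j) else 0)
    = ∏ j, (if i ≤ j then q j (xt j) (y0 j) else 1) := by
  have h1 : ∀ yt : Fin d → V,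
      (if (∀ j : Fin d, i ≤ j → yt j = xt j) then ∏ j, q j (yt j) (y0 j) else 0)
      = ∏ j, (if (i ≤ j → yt j = xt j) then q j (yt j) (y0 j) else 0) := by
    intro yt
    by_cases h : ∀ j : Fin d, i ≤ j → yt j = xt j
    · rw [if_pos h]
      exact Finset.prod_congr rfl fun j _ => (if_pos (h j)).symm
    · rw [if_neg h]
      push_neg at h
      obtain ⟨j, hj⟩ := h
      exact (Finset.prod_eq_zero (Finset.mem_univ j)
        (by rw [if_neg]; intro h'; exact hj.2 (h' hj.1))).symm
  simp only [h1]
  have hps := Fintype.prod_sum (κ := fun _ : Fin d => V) (R := ℝ)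
    (fun j v => if i ≤ j → v = xt j then q j v (y0 j) else 0)
  refine hps.symm.trans ?_
  refine Finset.prod_congr rfl fun j _ => ?_
  by_cases hj : i ≤ j
  · simp only [hj, forall_true_left, if_pos]
    simp
  · simp only [hj, false_implies, if_true]
    simpa using hqsum j (y0 j)

private lemma cticp_Pr_eq_suffix {V : Type*} [Fintype V] {d : ℕ}
    (p0 : (Fin d → V) → ℝ) (q : Fin d → V → V → ℝ)
    (hqsum : ∀ j v, ∑ u, q j u v = 1) (i : Fin d) (xt : Fin d → V)
    (P : (Fin d → V) → Prop)
    (A : (Fin d → V) → (Fin d → V) → Prop)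
    (hA : ∀ y0 yt, A y0 yt ↔ ((∀ j : Fin d, i ≤ j → yt j = xt j) ∧ P y0)) :
    Pr p0 q A = ∑ y0, if P y0 then
      p0 y0 * ∏ j, (if i ≤ j then q j (xt j) (y0 j) else 1) else 0 := by
  unfold Pr jointPMF
  refine Finset.sum_congr rfl fun y0 _ => ?_
  simp only [hA]
  by_cases hP : P y0
  · simp only [hP, and_true, if_true]
    rw [← cticp_sum_collapse q hqsum i xt y0, Finset.mul_sum]
    exact Finset.sum_congr rfl fun yt _ => by split <;> simp
  · simp [hP]

/-- Under a position-wise factorized forward corruption process,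
the clean token at position `i` is conditionally independent of the corrupted
prefix given the corrupted suffix and the clean prefix:
`P(X_0^i = a | X_t = x_t, X_0^{<i} = w) = P(X_0^i = a | X_t^{≥i} = x_t^{≥i}, X_0^{<i} = w)`. -/
theorem clean_token_cond_indep_corrupted_prefix
    {V : Type*} [Fintype V] [Nonempty V] {d : ℕ} (hd : 0 < d)
    (p0 : (Fin d → V) → ℝ) (q : Fin d → V → V → ℝ)
    (hp0 : ∀ x, 0 ≤ p0 x) (hp0sum : ∑ x, p0 x = 1)
    (hq : ∀ j v u, 0 ≤ q j u v) (hqsum : ∀ j v, ∑ u, q j u v = 1)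
    (i : Fin d) (xt : Fin d → V) (w : Fin (i : ℕ) → V) (a : V)
    (hpos : 0 < Pr p0 q (fun y0 yt => yt = xt ∧
      ∀ j : Fin d, (hj : (j : ℕ) < (i : ℕ)) → y0 j = w ⟨j, hj⟩)) :
    Pr p0 q (fun y0 yt => y0 i = a ∧ yt = xt ∧
        ∀ j : Fin d, (hj : (j : ℕ) < (i : ℕ)) → y0 j = w ⟨j, hj⟩) /
      Pr p0 q (fun y0 yt => yt = xt ∧
        ∀ j : Fin d, (hj : (j : ℕ) < (i : ℕ)) → y0 j = w ⟨j, hj⟩)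
    =
    Pr p0 q (fun y0 yt => y0 i = a ∧ (∀ j : Fin d, i ≤ j → yt j = xt j) ∧
        ∀ j : Fin d, (hj : (j : ℕ) < (i : ℕ)) → y0 j = w ⟨j, hj⟩) /
      Pr p0 q (fun y0 yt => (∀ j : Fin d, i ≤ j → yt j = xt j) ∧
        ∀ j : Fin d, (hj : (j : ℕ) < (i : ℕ)) → y0 j = w ⟨j, hj⟩) := by
  classical
  set Pfx : (Fin d → V) → Prop :=
    fun y0 => ∀ j : Fin d, (hj : (j : ℕ) < (i : ℕ)) → y0 j = w ⟨j, hj⟩ with hPfx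
  set C : ℝ := ∏ j : Fin d, if h : (j : ℕ) < (i : ℕ) then q j (xt j) (w ⟨j, h⟩) else 1
    with hC
  -- factorization of the full product for sequences with the given prefix
  have hsplit : ∀ y0 : Fin d → V, Pfx y0 →
      (∏ j, q j (xt j) (y0 j)) = C * ∏ j, (if i ≤ j then q j (xt j) (y0 j) else 1) := by
    intro y0 h
    rw [hC, ← Finset.prod_mul_distrib]
    refine Finset.prod_congr rfl fun j _ => ?_
    by_cases hj : (j : ℕ) < (i : ℕ)
    · have hle : ¬ i ≤ j := by rw [Fin.le_def]; omega
      rw [dif_pos hj, if_neg hle, h j hj, mul_one]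
    · have hle : i ≤ j := by rw [Fin.le_def]; omega
      rw [dif_neg hj, if_pos hle, one_mul]
  -- key: point probability = C * suffix probability
  have key : ∀ (P : (Fin d → V) → Prop)
      (A B : (Fin d → V) → (Fin d → V) → Prop),
      (∀ y0 yt, A y0 yt ↔ (yt = xt ∧ P y0)) →
      (∀ y0 yt, B y0 yt ↔ ((∀ j : Fin d, i ≤ j → yt j = xt j) ∧ P y0)) →
      (∀ y0, P y0 → Pfx y0) →
      Pr p0 q A = C * Pr p0 q B := by
    intro P A B hA hB hP
    rw [cticp_Pr_eq_point p0 q xt P A hA, cticp_Pr_eq_suffix p0 q hqsum i xt P B hB,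
      Finset.mul_sum]
    refine Finset.sum_congr rfl fun y0 _ => ?_
    by_cases h : P y0
    · rw [if_pos h, if_pos h, hsplit y0 (hP y0 h)]; ring
    · simp [h]
  have hNL := key (fun y0 => y0 i = a ∧ Pfx y0)
    (fun y0 yt => y0 i = a ∧ yt = xt ∧
      ∀ j : Fin d, (hj : (j : ℕ) < (i : ℕ)) → y0 j = w ⟨j, hj⟩)
    (fun y0 yt => y0 i = a ∧ (∀ j : Fin d, i ≤ j → yt j = xt j) ∧
      ∀ j : Fin d, (hj : (j : ℕ) < (i : ℕ)) → y0 j = w ⟨j, hj⟩)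
    (fun y0 yt => by simp only [hPfx]; tauto)
    (fun y0 yt => by simp only [hPfx]; tauto) (fun y0 h => h.2)
  have hDL := key Pfx
    (fun y0 yt => yt = xt ∧
      ∀ j : Fin d, (hj : (j : ℕ) < (i : ℕ)) → y0 j = w ⟨j, hj⟩)
    (fun y0 yt => (∀ j : Fin d, i ≤ j → yt j = xt j) ∧
      ∀ j : Fin d, (hj : (j : ℕ) < (i : ℕ)) → y0 j = w ⟨j, hj⟩)
    (fun y0 yt => by simp only [hPfx]) (fun y0 yt => by simp only [hPfx])
    (fun y0 h => h)
  rw [hDL] at hpos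
  have hCne : C ≠ 0 := by
    intro h
    rw [h, zero_mul] at hpos
    exact lt_irrefl 0 hpos
  rw [hNL, hDL, mul_div_mul_left _ _ hCne]
end

section
/- Under a position-wise factorized forward corruption process with strictly positive p_0 and strictly positive corruption kernels q_j, the prefix-conditioned clean-token posterior satisfies the proportionality identity of Lemma 1: for every index i with 1 ≤ i ≤ d, every x_t ∈ V^d and every w ∈ V^{i-1}, there exists a constant c > 0 (depending on x_t, w, and i but not on a) such that for all a ∈ V, P(X_0^i = a | X_t = x_t, X_0^{<i} = w) = c · P(X_0^i = a | X_t = x_t) · P(X_0^i = a | X_t^{>i} = x_t^{>i}, X_0^{<i} = w) / P(X_0^i = a | X_t^{-i} = x_t^{-i}). -/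
open scoped Classical

lemma sum_if_forall {V : Type*} [Fintype V] {d : ℕ}
    (q : Fin d → V → V → ℝ) (hqsum : ∀ j v, ∑ u, q j u v = 1)
    (xt y0 : Fin d → V) (c : Fin d → Prop) :
    ∑ yt : Fin d → V, (if ∀ j, c j → yt j = xt j then ∏ j, q j (yt j) (y0 j) else 0)
      = ∏ j, (if c j then q j (xt j) (y0 j) else 1) := by
  have h1 : ∀ yt : Fin d → V,
      (if ∀ j, c j → yt j = xt j then ∏ j, q j (yt j) (y0 j) else 0)
      = ∏ j, (if c j → yt j = xt j then q j (yt j) (y0 j) else 0) := by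
    intro yt
    by_cases h : ∀ j, c j → yt j = xt j
    · rw [if_pos h]
      exact Finset.prod_congr rfl fun j _ => (if_pos (h j)).symm
    · rw [if_neg h]
      push_neg at h
      obtain ⟨j, hj1, hj2⟩ := h
      refine (Finset.prod_eq_zero (Finset.mem_univ j) ?_).symm
      exact if_neg (fun hcon => hj2 (hcon hj1))
  simp_rw [h1]
  rw [show (∑ yt : Fin d → V, ∏ j, if c j → yt j = xt j then q j (yt j) (y0 j) else 0)
      = ∏ j, ∑ u, (if c j → u = xt j then q j u (y0 j) else 0) from
    (Fintype.prod_sum fun j u => if c j → u = xt j then q j u (y0 j) else 0).symm]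
  refine Finset.prod_congr rfl fun j _ => ?_
  by_cases hc : c j
  · rw [if_pos hc]
    rw [Finset.sum_congr rfl
      (fun u _ => if_congr ⟨fun h => h hc, fun h _ => h⟩ rfl rfl)]
    simp
  · rw [if_neg hc]
    rw [Finset.sum_congr rfl (fun u _ => by
      rw [if_pos (fun h => absurd h hc)])]
    exact hqsum j (y0 j)

lemma Pr_congr {V : Type*} [Fintype V] {d : ℕ}
    (p0 : (Fin d → V) → ℝ) (q : Fin d → V → V → ℝ)
    {A B : (Fin d → V) → (Fin d → V) → Prop}
    (h : ∀ y0 yt, A y0 yt ↔ B y0 yt) : Pr p0 q A = Pr p0 q B :=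
  Finset.sum_congr rfl fun y0 _ => Finset.sum_congr rfl fun yt _ => by
    rw [if_congr (h y0 yt) rfl rfl]

lemma Pr_eq {V : Type*} [Fintype V] {d : ℕ}
    (p0 : (Fin d → V) → ℝ) (q : Fin d → V → V → ℝ)
    (hqsum : ∀ j v, ∑ u, q j u v = 1) (xt : Fin d → V)
    (Q : (Fin d → V) → Prop) (c : Fin d → Prop) :
    Pr p0 q (fun y0 yt => Q y0 ∧ ∀ j, c j → yt j = xt j)
      = ∑ y0, if Q y0 then p0 y0 * ∏ j, (if c j then q j (xt j) (y0 j) else 1) else 0 := by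
  unfold Pr jointPMF
  refine Finset.sum_congr rfl fun y0 _ => ?_
  by_cases hQ : Q y0
  · simp only [hQ, true_and, if_true]
    simp_rw [← mul_ite_zero, ← Finset.mul_sum, sum_if_forall q hqsum xt y0 c]
  · simp [hQ]

/-- Auxiliary sum used to express the event probabilities. -/
noncomputable def condSum {V : Type*} [Fintype V] {d : ℕ}
    (p0 : (Fin d → V) → ℝ) (q : Fin d → V → V → ℝ) (xt : Fin d → V)
    (Q : (Fin d → V) → Prop) (c : Fin d → Prop) : ℝ :=
  ∑ y0, if Q y0 then p0 y0 * ∏ j, (if c j then q j (xt j) (y0 j) else 1) else 0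

lemma Pr_eq_condSum {V : Type*} [Fintype V] {d : ℕ}
    (p0 : (Fin d → V) → ℝ) (q : Fin d → V → V → ℝ)
    (hqsum : ∀ j v, ∑ u, q j u v = 1) (xt : Fin d → V)
    {A : (Fin d → V) → (Fin d → V) → Prop}
    (Q : (Fin d → V) → Prop) (c : Fin d → Prop)
    (h : ∀ y0 yt, A y0 yt ↔ (Q y0 ∧ ∀ j, c j → yt j = xt j)) :
    Pr p0 q A = condSum p0 q xt Q c :=
  (Pr_congr p0 q h).trans (Pr_eq p0 q hqsum xt Q c)

lemma condSum_pos {V : Type*} [Fintype V] {d : ℕ}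
    (p0 : (Fin d → V) → ℝ) (q : Fin d → V → V → ℝ) (xt : Fin d → V)
    (hp0 : ∀ x, 0 < p0 x) (hq : ∀ j v u, 0 < q j u v)
    {Q : (Fin d → V) → Prop} (hQ : ∃ y, Q y) (c : Fin d → Prop) :
    0 < condSum p0 q xt Q c := by
  obtain ⟨y, hy⟩ := hQ
  have hterm : ∀ y0 : Fin d → V, Q y0 →
      0 < p0 y0 * ∏ j, (if c j then q j (xt j) (y0 j) else 1) := by
    intro y0 _
    exact mul_pos (hp0 y0) (Finset.prod_pos fun j _ => by
      split
      · exact hq j (y0 j) (xt j)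
      · exact one_pos)
  refine Finset.sum_pos' (fun y0 _ => ?_) ⟨y, Finset.mem_univ y, ?_⟩
  · split
    · exact le_of_lt (hterm y0 (by assumption))
    · exact le_refl 0
  · rw [if_pos hy]; exact hterm y hy

lemma prod_split_ne {d : ℕ} (i : Fin d) (f : Fin d → ℝ) :
    ∏ j, f j = f i * ∏ j, (if j ≠ i then f j else 1) := by
  have h : ∀ j : Fin d, f j = (if j = i then f j else 1) * (if j ≠ i then f j else 1) := by
    intro j; by_cases h : j = i <;> simp [h]
  rw [Finset.prod_congr rfl (fun j _ => h j), Finset.prod_mul_distrib,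
    Finset.prod_ite_eq' Finset.univ i f]
  simp

lemma prod_split_tri {d : ℕ} (i : Fin d) (f : Fin d → ℝ) :
    ∏ j, (if j ≠ i then f j else 1)
      = (∏ j : Fin d, if (j : ℕ) < (i : ℕ) then f j else 1) * (∏ j : Fin d, if i < j then f j else 1) := by
  rw [← Finset.prod_mul_distrib]
  refine Finset.prod_congr rfl fun j _ => ?_
  rcases lt_trichotomy j i with h|h|h
  · rw [if_pos h.ne, if_pos (Fin.lt_def.mp h), if_neg (not_lt_of_gt h), mul_one]
  · subst h; simp
  · rw [if_pos h.ne', if_neg (fun hc => absurd (Fin.lt_def.mpr hc) (not_lt_of_gt h)),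
      if_pos h, one_mul]

/-- Lemma 1: Under a position-wise factorized forward corruption
process with strictly positive `p0` and strictly positive corruption kernels,
there is a constant `c > 0` (independent of `a`) such that for all `a`,
`P(X_0^i = a | X_t = x_t, X_0^{<i} = w)
  = c * P(X_0^i = a | X_t = x_t)
      * P(X_0^i = a | X_t^{>i} = x_t^{>i}, X_0^{<i} = w)
      / P(X_0^i = a | X_t^{-i} = x_t^{-i})`. -/
theorem prefix_conditioned_posterior_proportionality
    {V : Type*} [Fintype V] [Nonempty V] {d : ℕ} (hd : 0 < d)
    (p0 : (Fin d → V) → ℝ) (q : Fin d → V → V → ℝ)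
    (hp0 : ∀ x, 0 < p0 x) (hp0sum : ∑ x, p0 x = 1)
    (hq : ∀ j v u, 0 < q j u v) (hqsum : ∀ j v, ∑ u, q j u v = 1)
    (i : Fin d) (xt : Fin d → V) (w : Fin (i : ℕ) → V) :
    ∃ c : ℝ, 0 < c ∧ ∀ a : V,
      Pr p0 q (fun y0 yt => y0 i = a ∧ yt = xt ∧
          ∀ j : Fin d, (hj : (j : ℕ) < (i : ℕ)) → y0 j = w ⟨j, hj⟩) /
        Pr p0 q (fun y0 yt => yt = xt ∧
          ∀ j : Fin d, (hj : (j : ℕ) < (i : ℕ)) → y0 j = w ⟨j, hj⟩)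
      =
      c *
        (Pr p0 q (fun y0 yt => y0 i = a ∧ yt = xt) /
          Pr p0 q (fun _ yt => yt = xt)) *
        (Pr p0 q (fun y0 yt => y0 i = a ∧ (∀ j : Fin d, i < j → yt j = xt j) ∧
            ∀ j : Fin d, (hj : (j : ℕ) < (i : ℕ)) → y0 j = w ⟨j, hj⟩) /
          Pr p0 q (fun y0 yt => (∀ j : Fin d, i < j → yt j = xt j) ∧
            ∀ j : Fin d, (hj : (j : ℕ) < (i : ℕ)) → y0 j = w ⟨j, hj⟩)) /
        (Pr p0 q (fun y0 yt => y0 i = a ∧ ∀ j : Fin d, j ≠ i → yt j = xt j) /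
          Pr p0 q (fun _ yt => ∀ j : Fin d, j ≠ i → yt j = xt j)) := by
  classical
  obtain ⟨v0⟩ : Nonempty V := inferInstance
  have hyt : ∀ yt : Fin d → V, (yt = xt) ↔ (∀ j, True → yt j = xt j) := fun yt => by
    rw [funext_iff]; exact ⟨fun h j _ => h j, fun h j => h j trivial⟩
  have hwit : ∀ a : V, ∃ y0 : Fin d → V, y0 i = a ∧
      ∀ j : Fin d, (hj : (j : ℕ) < (i : ℕ)) → y0 j = w ⟨j, hj⟩ := by
    intro a
    refine ⟨fun j => if h : (j : ℕ) < (i : ℕ) then w ⟨j, h⟩ else a, ?_, ?_⟩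
    · simp
    · intro j hj; simp [hj]
  have hKpos : 0 < ∏ j : Fin d,
      (if h : (j : ℕ) < (i : ℕ) then q j (xt j) (w ⟨j, h⟩) else 1) := by
    refine Finset.prod_pos fun j _ => ?_
    split
    · exact hq _ _ _
    · exact one_pos
  have hBpos : 0 < condSum p0 q xt
      (fun y0 => ∀ j : Fin d, (hj : (j : ℕ) < (i : ℕ)) → y0 j = w ⟨j, hj⟩) (fun _ => True) :=
    condSum_pos p0 q xt hp0 hq ((hwit v0).imp fun _ hy => hy.2) _
  have hDpos : 0 < condSum p0 q xt (fun _ => True) (fun _ => True) :=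
    condSum_pos p0 q xt hp0 hq ⟨fun _ => v0, trivial⟩ _
  have hFpos : 0 < condSum p0 q xt
      (fun y0 => ∀ j : Fin d, (hj : (j : ℕ) < (i : ℕ)) → y0 j = w ⟨j, hj⟩) (fun j => i < j) :=
    condSum_pos p0 q xt hp0 hq ((hwit v0).imp fun _ hy => hy.2) _
  have hHpos : 0 < condSum p0 q xt (fun _ => True) (fun j => j ≠ i) :=
    condSum_pos p0 q xt hp0 hq ⟨fun _ => v0, trivial⟩ _
  refine ⟨(∏ j : Fin d, (if h : (j : ℕ) < (i : ℕ) then q j (xt j) (w ⟨j, h⟩) else 1))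
      * condSum p0 q xt (fun _ => True) (fun _ => True)
      * condSum p0 q xt
          (fun y0 => ∀ j : Fin d, (hj : (j : ℕ) < (i : ℕ)) → y0 j = w ⟨j, hj⟩) (fun j => i < j)
      / (condSum p0 q xt
          (fun y0 => ∀ j : Fin d, (hj : (j : ℕ) < (i : ℕ)) → y0 j = w ⟨j, hj⟩) (fun _ => True)
          * condSum p0 q xt (fun _ => True) (fun j => j ≠ i)),
    div_pos (mul_pos (mul_pos hKpos hDpos) hFpos) (mul_pos hBpos hHpos), fun a => ?_⟩
  have hGpos : 0 < condSum p0 q xt (fun y0 => y0 i = a) (fun j => j ≠ i) :=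
    condSum_pos p0 q xt hp0 hq ((hwit a).imp fun _ hy => hy.1) _
  -- rewrite the eight probabilities
  have eA : Pr p0 q (fun y0 yt => y0 i = a ∧ yt = xt ∧
        ∀ j : Fin d, (hj : (j : ℕ) < (i : ℕ)) → y0 j = w ⟨j, hj⟩)
      = condSum p0 q xt
        (fun y0 => y0 i = a ∧ ∀ j : Fin d, (hj : (j : ℕ) < (i : ℕ)) → y0 j = w ⟨j, hj⟩)
        (fun _ => True) :=
    Pr_eq_condSum p0 q hqsum xt _ _ (fun y0 yt => by rw [hyt yt]; try tauto)
  have eB : Pr p0 q (fun y0 yt => yt = xt ∧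
        ∀ j : Fin d, (hj : (j : ℕ) < (i : ℕ)) → y0 j = w ⟨j, hj⟩)
      = condSum p0 q xt
        (fun y0 => ∀ j : Fin d, (hj : (j : ℕ) < (i : ℕ)) → y0 j = w ⟨j, hj⟩)
        (fun _ => True) :=
    Pr_eq_condSum p0 q hqsum xt _ _ (fun y0 yt => by rw [hyt yt]; try tauto)
  have eC : Pr p0 q (fun y0 yt => y0 i = a ∧ yt = xt)
      = condSum p0 q xt (fun y0 => y0 i = a) (fun _ => True) :=
    Pr_eq_condSum p0 q hqsum xt _ _ (fun y0 yt => by rw [hyt yt]; try tauto)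
  have eD : Pr p0 q (fun _ yt => yt = xt)
      = condSum p0 q xt (fun _ => True) (fun _ => True) :=
    Pr_eq_condSum p0 q hqsum xt _ _ (fun y0 yt => by rw [hyt yt]; try tauto)
  have eE : Pr p0 q (fun y0 yt => y0 i = a ∧ (∀ j : Fin d, i < j → yt j = xt j) ∧
        ∀ j : Fin d, (hj : (j : ℕ) < (i : ℕ)) → y0 j = w ⟨j, hj⟩)
      = condSum p0 q xt
        (fun y0 => y0 i = a ∧ ∀ j : Fin d, (hj : (j : ℕ) < (i : ℕ)) → y0 j = w ⟨j, hj⟩)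
        (fun j => i < j) :=
    Pr_eq_condSum p0 q hqsum xt _ _ (fun y0 yt => by tauto)
  have eF : Pr p0 q (fun y0 yt => (∀ j : Fin d, i < j → yt j = xt j) ∧
        ∀ j : Fin d, (hj : (j : ℕ) < (i : ℕ)) → y0 j = w ⟨j, hj⟩)
      = condSum p0 q xt
        (fun y0 => ∀ j : Fin d, (hj : (j : ℕ) < (i : ℕ)) → y0 j = w ⟨j, hj⟩)
        (fun j => i < j) :=
    Pr_eq_condSum p0 q hqsum xt _ _ (fun y0 yt => by tauto)
  have eG : Pr p0 q (fun y0 yt => y0 i = a ∧ ∀ j : Fin d, j ≠ i → yt j = xt j)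
      = condSum p0 q xt (fun y0 => y0 i = a) (fun j => j ≠ i) :=
    Pr_eq_condSum p0 q hqsum xt _ _ (fun y0 yt => by tauto)
  have eH : Pr p0 q (fun _ yt => ∀ j : Fin d, j ≠ i → yt j = xt j)
      = condSum p0 q xt (fun _ => True) (fun j => j ≠ i) :=
    Pr_eq_condSum p0 q hqsum xt _ _ (fun y0 yt => by tauto)
  rw [eA, eB, eC, eD, eE, eF, eG, eH]
  -- key factorizations
  have hAE : condSum p0 q xt
        (fun y0 => y0 i = a ∧ ∀ j : Fin d, (hj : (j : ℕ) < (i : ℕ)) → y0 j = w ⟨j, hj⟩)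
        (fun _ => True)
      = q i (xt i) a
        * (∏ j : Fin d, (if h : (j : ℕ) < (i : ℕ) then q j (xt j) (w ⟨j, h⟩) else 1))
        * condSum p0 q xt
            (fun y0 => y0 i = a ∧ ∀ j : Fin d, (hj : (j : ℕ) < (i : ℕ)) → y0 j = w ⟨j, hj⟩)
            (fun j => i < j) := by
    unfold condSum
    rw [Finset.mul_sum]
    refine Finset.sum_congr rfl fun y0 _ => ?_
    by_cases hy : y0 i = a ∧ ∀ j : Fin d, (hj : (j : ℕ) < (i : ℕ)) → y0 j = w ⟨j, hj⟩
    · rw [if_pos hy, if_pos hy]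
      simp only [if_true]
      rw [prod_split_ne i (fun j => q j (xt j) (y0 j)),
        prod_split_tri i (fun j => q j (xt j) (y0 j))]
      have h2 : (∏ j : Fin d, if (j : ℕ) < (i : ℕ) then q j (xt j) (y0 j) else 1)
          = ∏ j : Fin d, (if h : (j : ℕ) < (i : ℕ) then q j (xt j) (w ⟨j, h⟩) else 1) := by
        refine Finset.prod_congr rfl fun j _ => ?_
        by_cases hj : (j : ℕ) < (i : ℕ)
        · rw [if_pos hj, dif_pos hj, hy.2 j hj]
        · rw [if_neg hj, dif_neg hj]
      rw [h2, hy.1]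
      ring
    · rw [if_neg hy, if_neg hy, mul_zero]
  have hCG : condSum p0 q xt (fun y0 => y0 i = a) (fun _ => True)
      = q i (xt i) a * condSum p0 q xt (fun y0 => y0 i = a) (fun j => j ≠ i) := by
    unfold condSum
    rw [Finset.mul_sum]
    refine Finset.sum_congr rfl fun y0 _ => ?_
    by_cases hy : y0 i = a
    · rw [if_pos hy, if_pos hy]
      simp only [if_true]
      rw [prod_split_ne i (fun j => q j (xt j) (y0 j)), hy]
      ring
    · rw [if_neg hy, if_neg hy, mul_zero]
  rw [hAE, hCG]
  have alg : ∀ (K qa E B D F G H : ℝ), B ≠ 0 → D ≠ 0 → F ≠ 0 → G ≠ 0 → H ≠ 0 →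
      qa * K * E / B = K * D * F / (B * H) * (qa * G / D) * (E / F) / (G / H) := by
    intro K qa E B D F G H hB hD hF hG hH
    field_simp
  exact alg _ _ _ _ _ _ _ _ hBpos.ne' hDpos.ne' hFpos.ne' hGpos.ne' hHpos.ne'
end

section
/- One speculative accept–reject step with residual correction commits a token whose law is exactly the target distribution: for probability mass functions π and ρ on a finite vocabulary V, with r = 1 − ∑_{z ∈ V} min(π(z), ρ(z)), the committed law κ defined by κ(x) = min(π(x), ρ(x)) + r · π'(x) when r > 0 (where π'(x) = max(π(x) − ρ(x), 0)/r), and κ(x) = min(π(x), ρ(x)) when r = 0, satisfies κ(x) = π(x) for all x ∈ V. In particular, for every x with ρ(x) > 0, the accepted mass ρ(x) · min(1, π(x)/ρ(x)) equals min(π(x), ρ(x)). -/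
/-- One speculative accept–reject step with residual correction
commits a token whose law is exactly the target distribution; in particular,
for every `x` with `ρ x > 0`, the accepted mass `ρ x * min 1 (π x / ρ x)`
equals `min (π x) (ρ x)`. -/
theorem speculative_step_exact_law {V : Type*} [Fintype V] [Nonempty V]
    (π ρ : V → ℝ)
    (hπ0 : ∀ x, 0 ≤ π x) (hρ0 : ∀ x, 0 ≤ ρ x)
    (hπ1 : ∑ x, π x = 1) (hρ1 : ∑ x, ρ x = 1) :
    (∀ x,
      (if 1 - ∑ z, min (π z) (ρ z) = 0 then min (π x) (ρ x)
       else min (π x) (ρ x) +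
         (1 - ∑ z, min (π z) (ρ z)) *
           (max (π x - ρ x) 0 / (1 - ∑ z, min (π z) (ρ z)))) = π x) ∧
    (∀ x, 0 < ρ x → ρ x * min 1 (π x / ρ x) = min (π x) (ρ x)) := by
  constructor
  · intro x
    by_cases h : 1 - ∑ z, min (π z) (ρ z) = 0
    · simp only [h, if_true]
      -- sums equal: ∑ min = 1 = ∑ π, and min ≤ π pointwise ⇒ equality pointwise
      have hsum : ∑ z, min (π z) (ρ z) = ∑ z, π z := by
        rw [hπ1]; linarith
      have := (Finset.sum_eq_sum_iff_of_le
        (fun i _ => min_le_left (π i) (ρ i))).mp hsum x (Finset.mem_univ x)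
      exact this
    · simp only [h, if_false]
      rw [mul_div_cancel₀ _ h]
      rcases le_total (π x) (ρ x) with hle | hle
      · rw [min_eq_left hle, max_eq_right (by linarith)]; ring
      · rw [min_eq_right hle, max_eq_left (by linarith)]; ring
  · intro x hx
    rcases le_total (π x) (ρ x) with hle | hle
    · rw [min_eq_left hle, min_eq_right ((div_le_one hx).mpr hle),
        mul_div_cancel₀ _ hx.ne']
    · rw [min_eq_right hle, min_eq_left ((one_le_div hx).mpr hle), mul_one]
end

section
/- Exact joint law of sequential speculative decoding (Theorem 1): let p* be a strictly positive probability mass function on V^L, and for each m ∈ {1,…,L} and each prefix w ∈ V^{m-1} let π_m(· | w) be the chain-rule conditional of p* at position m given prefix w, and let ρ_m(· | w) be an arbitrary probability mass function on V (the draft law). Define the committed kernel κ_m(a | w) = min(π_m(a | w), ρ_m(a | w)) + r_m(w) · π'_m(a | w) when r_m(w) = 1 − ∑_z min(π_m(z | w), ρ_m(z | w)) > 0, where π'_m(a | w) = max(π_m(a | w) − ρ_m(a | w), 0)/r_m(w), and κ_m(a | w) = min(π_m(a | w), ρ_m(a | w)) when r_m(w) = 0. Then the sequence generated by sampling each position left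 to right from the committed kernels has joint law p*: for every x ∈ V^L, ∏_{m=1}^{L} κ_m(x^m | x^{<m}) = p*(x). -/
open scoped Classical

/-- Chain-rule conditional of a pmf `pstar` on `V^L` at position `m` given a
prefix `w ∈ V^m` (0-based):
`π_m(a | w) = P(X^m = a | X^{<m} = w)`. -/
noncomputable def chainCond {V : Type*} [Fintype V] {L : ℕ}
    (pstar : (Fin L → V) → ℝ) (m : Fin L) (w : Fin (m : ℕ) → V) (a : V) : ℝ :=
  (∑ y : Fin L → V,
      if (∀ j : Fin L, (hj : (j : ℕ) < (m : ℕ)) → y j = w ⟨j, hj⟩) ∧ y m = a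
      then pstar y else 0) /
  (∑ y : Fin L → V,
      if ∀ j : Fin L, (hj : (j : ℕ) < (m : ℕ)) → y j = w ⟨j, hj⟩
      then pstar y else 0)

/-- The law of the token committed by one speculative accept–reject step with
target `π` and draft `ρ`: a draft token `a ~ ρ` is accepted with probability
`min 1 (π a / ρ a)` (accepted mass `min (π a) (ρ a)`); upon rejection
(probability `r = 1 - ∑ z, min (π z) (ρ z)`), a corrected token is sampled from
the residual distribution `π' a = max (π a - ρ a) 0 / r`. -/
noncomputable def committedKernel {V : Type*} [Fintype V] (π ρ : V → ℝ) (a : V) : ℝ :=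
  if 1 - ∑ z, min (π z) (ρ z) = 0 then min (π a) (ρ a)
  else min (π a) (ρ a) +
    (1 - ∑ z, min (π z) (ρ z)) *
      (max (π a - ρ a) 0 / (1 - ∑ z, min (π z) (ρ z)))

/-- A speculative accept–reject step with target pmf `π` commits a token with
law exactly `π`. -/
lemma committedKernel_eq_target {V : Type*} [Fintype V] (π ρ : V → ℝ)
    (h0 : ∀ a, 0 ≤ π a) (h1 : ∑ a, π a = 1) (a : V) :
    committedKernel π ρ a = π a := by
  unfold committedKernel
  by_cases h : 1 - ∑ z, min (π z) (ρ z) = 0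
  · rw [if_pos h]
    have hs : ∑ z, min (π z) (ρ z) = 1 := by linarith
    have hzero : ∑ z, (π z - min (π z) (ρ z)) = 0 := by
      rw [Finset.sum_sub_distrib, h1, hs]; ring
    have hz := (Finset.sum_eq_zero_iff_of_nonneg
      (fun z _ => sub_nonneg.mpr (min_le_left (π z) (ρ z)))).mp hzero a
      (Finset.mem_univ a)
    linarith [hz]
  · rw [if_neg h, mul_div_cancel₀ _ h]
    rcases le_total (π a) (ρ a) with hle | hle
    · rw [min_eq_left hle, max_eq_right (by linarith)]; ring
    · rw [min_eq_right hle, max_eq_left (by linarith)]; ring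

/-- Theorem 1, Exact joint law: sampling each position left to
right from the committed kernels built from the chain-rule conditionals `π_m`
of a strictly positive pmf `pstar` and arbitrary draft laws `ρ_m` produces a
sequence with joint law exactly `pstar`. -/
theorem speculative_decoding_exact_joint_law
    {V : Type*} [Fintype V] [Nonempty V] {L : ℕ} (hL : 0 < L)
    (pstar : (Fin L → V) → ℝ)
    (hpos : ∀ x, 0 < pstar x) (hsum : ∑ x, pstar x = 1)
    (ρ : (m : Fin L) → (Fin (m : ℕ) → V) → V → ℝ)
    (hρ0 : ∀ m w a, 0 ≤ ρ m w a) (hρ1 : ∀ m w, ∑ a, ρ m w a = 1) :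
    ∀ x : Fin L → V,
      (∏ m : Fin L,
        committedKernel
          (chainCond pstar m (fun j => x (Fin.castLE m.isLt.le j)))
          (ρ m (fun j => x (Fin.castLE m.isLt.le j)))
          (x m)) = pstar x := by
  intro x
  -- prefix-mass function
  set F : ℕ → ℝ := fun k => ∑ y : Fin L → V,
      if ∀ j : Fin L, (j : ℕ) < k → y j = x j then pstar y else 0 with hFdef
  have hF0 : F 0 = 1 := by
    rw [← hsum]
    refine Finset.sum_congr rfl fun y _ => ?_
    simp
  have hFL : F L = pstar x := by
    have hiff : ∀ y : Fin L → V,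
        (∀ j : Fin L, (j : ℕ) < L → y j = x j) ↔ y = x := by
      intro y
      constructor
      · intro h; funext j; exact h j j.isLt
      · rintro rfl j _; rfl
    have : F L = ∑ y : Fin L → V, if y = x then pstar y else 0 := by
      refine Finset.sum_congr rfl fun y _ => ?_
      exact if_congr (hiff y) rfl rfl
    rw [this, Finset.sum_ite_eq' Finset.univ x pstar]
    simp
  have hterm_nonneg : ∀ (k : ℕ) (y : Fin L → V),
      0 ≤ (if ∀ j : Fin L, (j : ℕ) < k → y j = x j then pstar y else 0 : ℝ) := by
    intro k y; split
    · exact (hpos y).le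
    · exact le_refl 0
  have hFpos : ∀ k, 0 < F k := by
    intro k
    have h2 : pstar x ≤ F k := by
      have := Finset.single_le_sum (f := fun y : Fin L → V =>
        if ∀ j : Fin L, (j : ℕ) < k → y j = x j then pstar y else 0)
        (fun y _ => hterm_nonneg k y) (Finset.mem_univ x)
      simpa using this
    linarith [hpos x]
  -- each factor equals F (m+1) / F m
  have key : ∀ m : Fin L,
      committedKernel
        (chainCond pstar m (fun j => x (Fin.castLE m.isLt.le j)))
        (ρ m (fun j => x (Fin.castLE m.isLt.le j)))
        (x m) = F ((m : ℕ) + 1) / F (m : ℕ) := by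
    intro m
    set w : Fin (m : ℕ) → V := fun j => x (Fin.castLE m.isLt.le j) with hw
    have hcond : ∀ y : Fin L → V,
        (∀ j : Fin L, (hj : (j : ℕ) < (m : ℕ)) → y j = w ⟨j, hj⟩) ↔
        (∀ j : Fin L, (j : ℕ) < (m : ℕ) → y j = x j) := by
      intro y
      constructor
      · intro h j hj
        have := h j hj
        simpa [hw, Fin.castLE] using this
      · intro h j hj
        have := h j hj
        simpa [hw, Fin.castLE] using this
    have hden : (∑ y : Fin L → V,
        if ∀ j : Fin L, (hj : (j : ℕ) < (m : ℕ)) → y j = w ⟨j, hj⟩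
        then pstar y else 0) = F (m : ℕ) := by
      refine Finset.sum_congr rfl fun y _ => ?_
      exact if_congr (hcond y) rfl rfl
    have hnum : ∀ a : V, (∑ y : Fin L → V,
        if (∀ j : Fin L, (hj : (j : ℕ) < (m : ℕ)) → y j = w ⟨j, hj⟩) ∧ y m = a
        then pstar y else 0) =
        ∑ y : Fin L → V,
          if (∀ j : Fin L, (j : ℕ) < (m : ℕ) → y j = x j) ∧ y m = a
          then pstar y else 0 := by
      intro a
      refine Finset.sum_congr rfl fun y _ => ?_
      exact if_congr (and_congr_left fun _ => hcond y) rfl rfl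
    have hπ : ∀ a : V, chainCond pstar m w a =
        (∑ y : Fin L → V,
          if (∀ j : Fin L, (j : ℕ) < (m : ℕ) → y j = x j) ∧ y m = a
          then pstar y else 0) / F (m : ℕ) := by
      intro a
      unfold chainCond
      rw [hden, hnum a]
    have hπ0 : ∀ a : V, 0 ≤ chainCond pstar m w a := by
      intro a
      rw [hπ a]
      refine div_nonneg (Finset.sum_nonneg fun y _ => ?_) (hFpos (m : ℕ)).le
      split
      · exact (hpos y).le
      · exact le_refl 0
    have hπ1 : ∑ a : V, chainCond pstar m w a = 1 := by
      have hswap : ∑ a : V, ∑ y : Fin L → V,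
          (if (∀ j : Fin L, (j : ℕ) < (m : ℕ) → y j = x j) ∧ y m = a
           then pstar y else 0) = F (m : ℕ) := by
        rw [Finset.sum_comm]
        refine Finset.sum_congr rfl fun y _ => ?_
        by_cases hc : ∀ j : Fin L, (j : ℕ) < (m : ℕ) → y j = x j
        · rw [if_pos hc]
          have h1 : ∀ a : V,
              (if (∀ j : Fin L, (j : ℕ) < (m : ℕ) → y j = x j) ∧ y m = a
               then pstar y else 0 : ℝ) = if y m = a then pstar y else 0 :=
            fun a => if_congr (and_iff_right hc) rfl rfl
          rw [Finset.sum_congr rfl (fun a _ => h1 a),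
            Finset.sum_ite_eq Finset.univ (y m) (fun _ => pstar y)]
          simp
        · rw [if_neg hc]
          refine Finset.sum_eq_zero fun a _ => ?_
          rw [if_neg (by tauto)]
      calc ∑ a : V, chainCond pstar m w a
          = (∑ a : V, ∑ y : Fin L → V,
              if (∀ j : Fin L, (j : ℕ) < (m : ℕ) → y j = x j) ∧ y m = a
              then pstar y else 0) / F (m : ℕ) := by
            rw [Finset.sum_div]
            exact Finset.sum_congr rfl fun a _ => hπ a
        _ = 1 := by rw [hswap]; exact div_self (hFpos (m : ℕ)).ne'
    rw [committedKernel_eq_target _ _ hπ0 hπ1, hπ (x m)]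
    congr 1
    refine Finset.sum_congr rfl fun y _ => ?_
    refine if_congr ?_ rfl rfl
    constructor
    · rintro ⟨h1, h2⟩ j hj
      rcases Nat.lt_succ_iff_lt_or_eq.mp hj with hlt | heq
      · exact h1 j hlt
      · have : j = m := Fin.ext heq
        rw [this]; exact h2
    · intro h
      exact ⟨fun j hj => h j (Nat.lt_succ_of_lt hj), h m (Nat.lt_succ_self _)⟩
  -- telescoping product
  have htel : ∀ n : ℕ,
      (∏ i ∈ Finset.range n, F (i + 1) / F i) = F n / F 0 := by
    intro n
    induction n with
    | zero => simp [div_self (hFpos 0).ne']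
    | succ n ih =>
        have h0 := (hFpos 0).ne'
        have hn := (hFpos n).ne'
        rw [Finset.prod_range_succ, ih]
        field_simp
  calc (∏ m : Fin L,
        committedKernel
          (chainCond pstar m (fun j => x (Fin.castLE m.isLt.le j)))
          (ρ m (fun j => x (Fin.castLE m.isLt.le j)))
          (x m))
      = ∏ m : Fin L, F ((m : ℕ) + 1) / F (m : ℕ) :=
        Finset.prod_congr rfl fun m _ => key m
    _ = ∏ i ∈ Finset.range L, F (i + 1) / F i :=
        Fin.prod_univ_eq_prod_range (fun i => F (i + 1) / F i) L
    _ = F L / F 0 := htel L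
    _ = pstar x := by rw [hF0, hFL, div_one]
end
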